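/- Let N = 2^J, let x ∈ ℝ^N, and let x̂ = F_N x. For every j with 0 ≤ j ≤ J-1, the first half x_0^(j+1) = (x_k^(j+1))_{k=0}^{2^j-1} of the periodization x^(j+1) is recovered from the odd-indexed samples y^(j) = (x̂_{2^{J-j-1}(2k+1)})_{k=0}^{2^j-1} by x_0^(j+1) = (1/2)( diag(ω_{2^{j+1}}^{-ℓ})_{ℓ=0}^{2^j-1} · F_{2^j}^{-1} · y^(j) + x^(j) ), and the second half satisfies x_1^(j+1) = x^(j) − x_0^(j+1), where x_1^(j+1) = (x_k^(j+1))_{k=2^j}^{2^{j+1}-1}. -/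

import Mathlib

open Complex Finset

/-- `ω_M = e^{-2πi/M}`. -/
noncomputable def dftOmega (M : ℕ) : ℂ := Complex.exp (-2 * Real.pi * Complex.I / M)

/-- Discrete Fourier transform of length `M`: `(F_M v)_k = Σ_{r<M} ω_M^{k r} v_r`. -/
noncomputable def dft (M : ℕ) (v : ℕ → ℂ) (k : ℕ) : ℂ :=
  ∑ r ∈ Finset.range M, dftOmega M ^ (k * r) * v r

/-- The `2^j`-periodization of a vector `x ∈ ℝ^{2^J}`:
`x^(j)_k = Σ_{ℓ < 2^{J-j}} x_{k + 2^j ℓ}`. -/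
noncomputable def periodization (J j : ℕ) (x : ℕ → ℝ) (k : ℕ) : ℝ :=
  ∑ ℓ ∈ Finset.range (2 ^ (J - j)), x (k + 2 ^ j * ℓ)
/-- The Fourier matrix `F_M = (ω_M^{pq})_{p,q=0}^{M-1}`. -/
noncomputable def fourierMatrix (M : ℕ) : Matrix (Fin M) (Fin M) ℂ :=
  fun p q => dftOmega M ^ ((p : ℕ) * (q : ℕ))

-- helper lemmas

lemma dftOmega_ne_zero (M : ℕ) : dftOmega M ≠ 0 := Complex.exp_ne_zero _

lemma dftOmega_pow_nat (M k : ℕ) :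
    dftOmega M ^ k = Complex.exp (-2 * Real.pi * Complex.I * k / M) := by
  rw [dftOmega, ← Complex.exp_nat_mul]
  ring_nf

lemma dftOmega_pow_self (M : ℕ) (hM : M ≠ 0) : dftOmega M ^ M = 1 := by
  rw [dftOmega_pow_nat]
  have hM' : (M : ℂ) ≠ 0 := Nat.cast_ne_zero.mpr hM
  rw [mul_div_assoc, div_self hM', mul_one]
  have : (-2 : ℂ) * Real.pi * Complex.I = (-1 : ℤ) * (2 * Real.pi * Complex.I) := by ring
  rw [this, Complex.exp_int_mul_two_pi_mul_I]

lemma dftOmega_mul_pow (a M : ℕ) (ha : a ≠ 0) (hM : M ≠ 0) :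
    dftOmega (a * M) ^ a = dftOmega M := by
  rw [dftOmega_pow_nat, dftOmega]
  congr 1
  have ha' : (a : ℂ) ≠ 0 := Nat.cast_ne_zero.mpr ha
  push_cast
  rw [mul_comm (a : ℂ) (M : ℂ), mul_div_mul_right _ _ ha']

lemma dftOmega_two_mul_pow (M : ℕ) (hM : M ≠ 0) : dftOmega (2 * M) ^ M = -1 := by
  rw [dftOmega_pow_nat]
  have hM' : (M : ℂ) ≠ 0 := Nat.cast_ne_zero.mpr hM
  have h : (-2 : ℂ) * Real.pi * Complex.I * M / (↑(2 * M)) = -(Real.pi * Complex.I) := by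
    push_cast
    field_simp
  rw [h, Complex.exp_neg, Complex.exp_pi_mul_I]
  norm_num

lemma dftOmega_isPrimitiveRoot (M : ℕ) (hM : M ≠ 0) :
    IsPrimitiveRoot (dftOmega M) M := by
  have h := Complex.isPrimitiveRoot_exp M hM
  have he : dftOmega M = (Complex.exp (2 * Real.pi * Complex.I / M))⁻¹ := by
    rw [dftOmega, ← Complex.exp_neg]
    ring_nf
  rw [he]
  exact h.inv

noncomputable def dftInvMatrix (M : ℕ) : Matrix (Fin M) (Fin M) ℂ :=
  fun p q => (M : ℂ)⁻¹ * (dftOmega M ^ ((p : ℕ) * (q : ℕ)))⁻¹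

lemma fourier_right_inv (M : ℕ) (hM : M ≠ 0) :
    fourierMatrix M * dftInvMatrix M = 1 := by
  have hω : dftOmega M ≠ 0 := dftOmega_ne_zero M
  have hprim := dftOmega_isPrimitiveRoot M hM
  ext p q
  rw [Matrix.mul_apply]
  have hterm : ∀ r : Fin M,
      fourierMatrix M p r * dftInvMatrix M r q
        = (M : ℂ)⁻¹ * (dftOmega M ^ (p : ℕ) * (dftOmega M ^ (q : ℕ))⁻¹) ^ (r : ℕ) := by
    intro r
    simp only [fourierMatrix, dftInvMatrix, mul_pow, inv_pow, ← pow_mul]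
    rw [Nat.mul_comm (q : ℕ) (r : ℕ)]
    ring
  rw [Finset.sum_congr rfl (fun r _ => hterm r), ← Finset.mul_sum]
  by_cases hpq : p = q
  · subst hpq
    have h1 : dftOmega M ^ (p : ℕ) * (dftOmega M ^ (p : ℕ))⁻¹ = 1 :=
      mul_inv_cancel₀ (pow_ne_zero _ hω)
    simp [h1, Matrix.one_apply, Nat.cast_ne_zero.mpr hM]
  · set ζ := dftOmega M ^ (p : ℕ) * (dftOmega M ^ (q : ℕ))⁻¹ with hζ
    have hζ1 : ζ ≠ 1 := by
      intro h
      apply hpq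
      have hpow : dftOmega M ^ (p : ℕ) = dftOmega M ^ (q : ℕ) := by
        rw [hζ, mul_inv_eq_one₀ (pow_ne_zero _ hω)] at h
        exact h
      exact Fin.ext (hprim.pow_inj p.isLt q.isLt hpow)
    have hζM : ζ ^ M = 1 := by
      rw [hζ, mul_pow, inv_pow, ← pow_mul, ← pow_mul, Nat.mul_comm (p : ℕ) M,
        Nat.mul_comm (q : ℕ) M, pow_mul, pow_mul, dftOmega_pow_self M hM, one_pow]
      simp
    have hfin : ∑ r : Fin M, ζ ^ (r : ℕ) = ∑ r ∈ Finset.range M, ζ ^ r :=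
      (Finset.sum_range _).symm
    rw [hfin, geom_sum_eq hζ1, hζM]
    simp [Matrix.one_apply, hpq]

lemma sum_range_two_mul' {β : Type*} [AddCommMonoid β] (n : ℕ) (f : ℕ → β) :
    ∑ i ∈ Finset.range (2 * n), f i
      = ∑ i ∈ Finset.range n, (f (2 * i) + f (2 * i + 1)) := by
  induction n with
  | zero => simp
  | succ n ih =>
      rw [Nat.mul_succ, Finset.sum_range_succ, Finset.sum_range_succ, Finset.sum_range_succ,
        ← ih, add_assoc]

lemma sum_range_mul' {β : Type*} [AddCommMonoid β] (a b : ℕ) (f : ℕ → β) :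
    ∑ r ∈ Finset.range (a * b), f r
      = ∑ t ∈ Finset.range b, ∑ s ∈ Finset.range a, f (a * t + s) := by
  induction b with
  | zero => simp
  | succ b ih =>
      rw [Nat.mul_succ, Finset.sum_range_add, ih, Finset.sum_range_succ]

lemma dft_periodized (J j : ℕ) (hj : j ≤ J) (x : ℕ → ℝ) (m : ℕ) :
    dft (2 ^ J) (fun n => (x n : ℂ)) (2 ^ (J - j) * m)
      = ∑ s ∈ Finset.range (2 ^ j),
          dftOmega (2 ^ j) ^ (m * s) * (periodization J j x s : ℂ) := by
  have hsplitN : (2 : ℕ) ^ J = 2 ^ j * 2 ^ (J - j) := by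
    rw [← pow_add]; congr 1; omega
  have hbase : dftOmega (2 ^ J) ^ (2 ^ (J - j)) = dftOmega (2 ^ j) := by
    have h := dftOmega_mul_pow (2 ^ (J - j)) (2 ^ j) (by positivity) (by positivity)
    rwa [mul_comm, ← hsplitN] at h
  unfold dft
  rw [show Finset.range (2 ^ J) = Finset.range (2 ^ j * 2 ^ (J - j)) from by rw [← hsplitN],
    sum_range_mul', Finset.sum_comm]
  apply Finset.sum_congr rfl
  intro s hs
  have hterm : ∀ t ∈ Finset.range (2 ^ (J - j)),
      dftOmega (2 ^ J) ^ (2 ^ (J - j) * m * (2 ^ j * t + s)) * (x (2 ^ j * t + s) : ℂ)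
        = dftOmega (2 ^ j) ^ (m * s) * (x (s + 2 ^ j * t) : ℂ) := by
    intro t _
    have hexp : 2 ^ (J - j) * m * (2 ^ j * t + s)
        = 2 ^ J * (m * t) + 2 ^ (J - j) * (m * s) := by
      rw [hsplitN]; ring
    have h1 : dftOmega (2 ^ J) ^ (2 ^ J * (m * t)) = 1 := by
      rw [pow_mul, dftOmega_pow_self (2 ^ J) (by positivity), one_pow]
    have h2 : dftOmega (2 ^ J) ^ (2 ^ (J - j) * (m * s)) = dftOmega (2 ^ j) ^ (m * s) := by
      rw [pow_mul, hbase]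
    rw [hexp, pow_add, h1, h2, one_mul, Nat.add_comm (2 ^ j * t) s]
  rw [Finset.sum_congr rfl hterm, ← Finset.mul_sum]
  congr 1
  rw [periodization]
  push_cast
  ring


/-- with `y^(j)_k = x̂_{2^{J-j-1}(2k+1)}`, the first half of `x^(j+1)` is
`x_0^(j+1) = (1/2)(diag(ω_{2^{j+1}}^{-ℓ}) F_{2^j}^{-1} y^(j) + x^(j))`,
and the second half is `x_1^(j+1) = x^(j) − x_0^(j+1)`. -/
theorem periodization_first_half_recovery (J : ℕ) (x : ℕ → ℝ)
    (j : ℕ) (hj : j + 1 ≤ J)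
    (y : Fin (2 ^ j) → ℂ)
    (hy : ∀ k : Fin (2 ^ j),
      y k = dft (2 ^ J) (fun n => (x n : ℂ)) (2 ^ (J - j - 1) * (2 * (k : ℕ) + 1))) :
    (∀ ℓ : Fin (2 ^ j),
      (periodization J (j + 1) x (ℓ : ℕ) : ℂ)
        = (1 / 2) * ((dftOmega (2 ^ (j + 1)) ^ (ℓ : ℕ))⁻¹ *
            ((fourierMatrix (2 ^ j))⁻¹.mulVec y ℓ) + (periodization J j x (ℓ : ℕ) : ℂ))) ∧
    (∀ ℓ : Fin (2 ^ j),
      periodization J (j + 1) x ((ℓ : ℕ) + 2 ^ j)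
        = periodization J j x (ℓ : ℕ) - periodization J (j + 1) x (ℓ : ℕ)) := by
  
  have hMne : (2 : ℕ) ^ j ≠ 0 := by positivity
  have hsplit : ∀ k : ℕ, periodization J j x k
      = periodization J (j + 1) x k + periodization J (j + 1) x (k + 2 ^ j) := by
    intro k
    unfold periodization
    have h2 : (2 : ℕ) ^ (J - j) = 2 * 2 ^ (J - (j + 1)) := by
      rw [show J - j = (J - (j + 1)) + 1 by omega, pow_succ]; ring
    rw [h2, sum_range_two_mul', Finset.sum_add_distrib]
    congr 1 <;> (apply Finset.sum_congr rfl; intro m _; congr 1; ring)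
  constructor
  · intro ℓ
    set z : Fin (2 ^ j) → ℂ := fun ℓ => dftOmega (2 ^ (j + 1)) ^ (ℓ : ℕ) *
        ((periodization J (j + 1) x (ℓ : ℕ) : ℂ)
          - (periodization J (j + 1) x ((ℓ : ℕ) + 2 ^ j) : ℂ)) with hz
    have hA2 : dftOmega (2 ^ (j + 1)) ^ 2 = dftOmega (2 ^ j) := by
      have h := dftOmega_mul_pow 2 (2 ^ j) two_ne_zero hMne
      rwa [show (2 : ℕ) * 2 ^ j = 2 ^ (j + 1) by ring] at h
    have hAneg : dftOmega (2 ^ (j + 1)) ^ (2 ^ j) = -1 := by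
      have h := dftOmega_two_mul_pow (2 ^ j) hMne
      rwa [show (2 : ℕ) * 2 ^ j = 2 ^ (j + 1) by ring] at h
    have hyz : y = (fourierMatrix (2 ^ j)).mulVec z := by
      funext k
      rw [hy k]
      rw [show J - j - 1 = J - (j + 1) by omega,
        dft_periodized J (j + 1) hj x (2 * (k : ℕ) + 1)]
      rw [show Finset.range (2 ^ (j + 1)) = Finset.range (2 ^ j + 2 ^ j) from by
            congr 1; rw [pow_succ]; ring,
        Finset.sum_range_add]
      have hterm2 : ∀ s ∈ Finset.range (2 ^ j),
          dftOmega (2 ^ (j + 1)) ^ ((2 * (k : ℕ) + 1) * (2 ^ j + s))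
              * (periodization J (j + 1) x (2 ^ j + s) : ℂ)
            = -(dftOmega (2 ^ (j + 1)) ^ ((2 * (k : ℕ) + 1) * s)
              * (periodization J (j + 1) x (s + 2 ^ j) : ℂ)) := by
        intro s _
        have hexp : (2 * (k : ℕ) + 1) * (2 ^ j + s)
            = 2 ^ j * (2 * (k : ℕ) + 1) + (2 * (k : ℕ) + 1) * s := by ring
        have hneg : dftOmega (2 ^ (j + 1)) ^ (2 ^ j * (2 * (k : ℕ) + 1)) = -1 := by
          rw [pow_mul, hAneg, Odd.neg_one_pow ⟨(k : ℕ), by ring⟩]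
        rw [hexp, pow_add, hneg, Nat.add_comm (2 ^ j) s]
        ring
      rw [Finset.sum_congr rfl hterm2, ← Finset.sum_add_distrib]
      have hterm3 : ∀ s ∈ Finset.range (2 ^ j),
          dftOmega (2 ^ (j + 1)) ^ ((2 * (k : ℕ) + 1) * s) * (periodization J (j + 1) x s : ℂ)
            + -(dftOmega (2 ^ (j + 1)) ^ ((2 * (k : ℕ) + 1) * s)
              * (periodization J (j + 1) x (s + 2 ^ j) : ℂ))
          = dftOmega (2 ^ j) ^ ((k : ℕ) * s) * (dftOmega (2 ^ (j + 1)) ^ s *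
              ((periodization J (j + 1) x s : ℂ)
                - (periodization J (j + 1) x (s + 2 ^ j) : ℂ))) := by
        intro s _
        have hsplitpow : dftOmega (2 ^ (j + 1)) ^ ((2 * (k : ℕ) + 1) * s)
            = dftOmega (2 ^ j) ^ ((k : ℕ) * s) * dftOmega (2 ^ (j + 1)) ^ s := by
          rw [show (2 * (k : ℕ) + 1) * s = 2 * ((k : ℕ) * s) + s by ring, pow_add,
            pow_mul, hA2]
        rw [hsplitpow]
        ring
      rw [Finset.sum_congr rfl hterm3, Finset.sum_range
        (fun s => dftOmega (2 ^ j) ^ ((k : ℕ) * s) * (dftOmega (2 ^ (j + 1)) ^ s *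
          ((periodization J (j + 1) x s : ℂ)
            - (periodization J (j + 1) x (s + 2 ^ j) : ℂ))))]
      simp [Matrix.mulVec, dotProduct, fourierMatrix, hz]
    rw [hyz]
    have hFinv : (fourierMatrix (2 ^ j))⁻¹ * fourierMatrix (2 ^ j) = 1 := by
      have h := fourier_right_inv (2 ^ j) hMne
      have : Invertible (fourierMatrix (2 ^ j)) := invertibleOfRightInverse _ _ h
      exact Matrix.inv_mul_of_invertible _
    rw [Matrix.mulVec_mulVec, hFinv, Matrix.one_mulVec]
    have hzℓ : z ℓ = dftOmega (2 ^ (j + 1)) ^ (ℓ : ℕ) *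
        ((periodization J (j + 1) x (ℓ : ℕ) : ℂ)
          - (periodization J (j + 1) x ((ℓ : ℕ) + 2 ^ j) : ℂ)) := rfl
    rw [hzℓ, inv_mul_cancel_left₀ (pow_ne_zero _ (dftOmega_ne_zero _))]
    have hcast : (periodization J j x (ℓ : ℕ) : ℂ)
        = (periodization J (j + 1) x (ℓ : ℕ) : ℂ)
          + (periodization J (j + 1) x ((ℓ : ℕ) + 2 ^ j) : ℂ) := by
      exact_mod_cast congrArg Complex.ofReal (hsplit (ℓ : ℕ))
    rw [hcast]
    ring
  · intro ℓ
    have := hsplit (ℓ : ℕ)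
    linarith
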